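/- Let S be any set, let μ, μ̂, σ : S → ℝ with σ(s) > 0 for all s, let c ∈ ℝ, τ > 0, η > 0 and a ≥ 0. If |μ̂(s) − μ(s)| < a τ σ(s) for every s ∈ A_c^η, and |μ̂(s) − μ(s)| < a τ σ(s) + η σ(s) for every s ∈ S \ A_c^η, then the inclusions Â_c^+ ⊆ A_c ⊆ Â_c^− hold. -/
import Mathlib


noncomputable section

/-- The excursion set `A_c = {s : μ s ≥ c}`. -/
def excursionSet {α : Type*} (μ : α → ℝ) (c : ℝ) : Set α := {s | c ≤ μ s}

/-- The upper CoPE set `Â_c(+a)`. -/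
def copePlus {α : Type*} (μhat σ : α → ℝ) (c τ a : ℝ) : Set α :=
  {s | a ≤ (μhat s - c) / (τ * σ s)}

/-- The lower CoPE set `Â_c(-a)`. -/
def copeMinus {α : Type*} (μhat σ : α → ℝ) (c τ a : ℝ) : Set α :=
  {s | -a ≤ (μhat s - c) / (τ * σ s)}

/-- The inflated boundary `A_c^η = {s : c - η σ(s) ≤ μ(s) ≤ c + η σ(s)}`. -/
def inflatedBoundary {α : Type*} (μ σ : α → ℝ) (c η : ℝ) : Set α :=
  {s | c - η * σ s ≤ μ s ∧ μ s ≤ c + η * σ s}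

/-- If the estimation error is small on the inflated boundary `A_c^η` and moderately small off
it, then the CoPE sets bracket the excursion set: `Â_c^+ ⊆ A_c ⊆ Â_c^-`. -/
theorem cope_inclusion_of_pointwise_bounds
    {S : Type*} (μ μhat σ : S → ℝ) (hσ : ∀ s, 0 < σ s)
    (c τ η a : ℝ) (hτ : 0 < τ) (hη : 0 < η) (ha : 0 ≤ a)
    (hclose : ∀ s ∈ inflatedBoundary μ σ c η, |μhat s - μ s| < a * τ * σ s)
    (hfar : ∀ s ∈ (Set.univ : Set S) \ inflatedBoundary μ σ c η,
      |μhat s - μ s| < a * τ * σ s + η * σ s) :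
    copePlus μhat σ c τ a ⊆ excursionSet μ c ∧
      excursionSet μ c ⊆ copeMinus μhat σ c τ a := by
  constructor
  · intro s hs
    have hts : 0 < τ * σ s := mul_pos hτ (hσ s)
    have h1 : a * (τ * σ s) ≤ μhat s - c := (le_div_iff₀ hts).mp hs
    by_cases hb : s ∈ inflatedBoundary μ σ c η
    · have h2 := (abs_lt.mp (hclose s hb)).2
      show c ≤ μ s
      nlinarith
    · have h2 := (abs_lt.mp (hfar s ⟨Set.mem_univ s, hb⟩)).2
      rcases not_and_or.mp hb with h3 | h3
      · push_neg at h3; show c ≤ μ s; nlinarith [(hσ s)]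
      · push_neg at h3; exact le_of_lt (lt_of_lt_of_le (by nlinarith [(hσ s)]) h3.le)
  · intro s hs
    have hts : 0 < τ * σ s := mul_pos hτ (hσ s)
    have hμ : c ≤ μ s := hs
    rw [copeMinus, Set.mem_setOf_eq, le_div_iff₀ hts]
    by_cases hb : s ∈ inflatedBoundary μ σ c η
    · have h2 := (abs_lt.mp (hclose s hb)).1
      nlinarith
    · have h2 := (abs_lt.mp (hfar s ⟨Set.mem_univ s, hb⟩)).1
      rcases not_and_or.mp hb with h3 | h3
      · push_neg at h3; nlinarith [(hσ s)]
      · push_neg at h3; nlinarith [(hσ s)]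

end
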